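/- Let (T, X) be a tree decomposition of adhesion at most two of a graph G. If G is claw-free, then for every node i of T the torso of the bag X(i) is claw-free. -/

import Mathlib

open SimpleGraph

variable {V : Type*}

/-- Reachability within the subgraph of `G` induced by the vertex set `W`. -/
def ReachIn (G : SimpleGraph V) (W : Set V) (x y : V) : Prop :=
  ∃ (hx : x ∈ W) (hy : y ∈ W), (G.induce W).Reachable ⟨x, hx⟩ ⟨y, hy⟩

/-- Removing `S` disconnects some connected component of `G`: there are two vertices
outside `S` that are connected in `G` but not in `G - S`. -/
def Separates (G : SimpleGraph V) (S : Set V) : Prop :=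
  ∃ u v : V, u ∉ S ∧ v ∉ S ∧ G.Reachable u v ∧ ¬ ReachIn G Sᶜ u v

/-- `S` is a minimal separator of `G`. -/
def IsMinimalSeparator (G : SimpleGraph V) (S : Set V) : Prop :=
  Separates G S ∧ ∀ S' ⊂ S, ¬ Separates G S'

/-- `C` is a connected component of the subgraph of `G` induced by `W`. -/
def IsCompOf (G : SimpleGraph V) (C W : Set V) : Prop :=
  C ⊆ W ∧ (G.induce C).Connected ∧ ∀ u ∈ C, ∀ v ∈ W, G.Adj u v → v ∈ C

/-- A separation `(A, B)` of a graph `G`. -/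
def IsSeparation (G : SimpleGraph V) (A B : Set V) : Prop :=
  A ∪ B = Set.univ ∧ ∀ u ∈ A \ B, ∀ v ∈ B \ A, ¬ G.Adj u v

/-- `(T, X)` is a tree decomposition of `G`. -/
structure IsTreeDecomp {ι : Type*} (G : SimpleGraph V) (T : SimpleGraph ι)
    (X : ι → Set V) : Prop where
  isTree : T.IsTree
  covers_verts : ∀ v : V, ∃ i, v ∈ X i
  covers_edges : ∀ ⦃u v : V⦄, G.Adj u v → ∃ i, u ∈ X i ∧ v ∈ X i
  subtree : ∀ v : V, (T.induce {i | v ∈ X i}).Connected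

/-- The tree decomposition given by the bag function `X` has adhesion at most `d`. -/
def AdhesionLE {ι : Type*} (T : SimpleGraph ι) (X : ι → Set V) (d : ℕ) : Prop :=
  ∀ ⦃i j : ι⦄, T.Adj i j → (X i ∩ X j).ncard ≤ d

/-- The torso of the vertex set `W` in `G`: the induced subgraph `G[W]` with an edge added
between each pair of vertices of `W` connected by a path internally avoiding `W`. -/
def torso (G : SimpleGraph V) (W : Set V) : SimpleGraph W :=
  SimpleGraph.fromRel (fun u v =>
    G.Adj u v ∨ ∃ p : G.Walk (u : V) (v : V), p.IsPath ∧
      ∀ z ∈ p.support, z ≠ (u : V) → z ≠ (v : V) → z ∉ W)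

/-- One smoothing step: `K` is obtained from `H` by replacing the degree-2 vertex `v`,
whose two neighbors are `a` and `b`, by a direct edge between `a` and `b`. -/
def SmoothStep (H K : SimpleGraph.Subgraph (⊤ : SimpleGraph V)) : Prop :=
  ∃ v a b : V, a ≠ b ∧ a ≠ v ∧ b ≠ v ∧ v ∈ H.verts ∧ H.neighborSet v = {a, b} ∧
    K.verts = H.verts \ {v} ∧
    ∀ x y : V, K.Adj x y ↔ ((H.Adj x y ∧ x ≠ v ∧ y ≠ v) ∨ (x = a ∧ y = b) ∨ (x = b ∧ y = a))

/-- `K` (a graph on a subset of the vertices of `G`) is a topological minor of `G`: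
it is obtained from a subgraph of `G` by repeatedly smoothing degree-2 vertices. -/
def IsTopMinor (K : SimpleGraph.Subgraph (⊤ : SimpleGraph V)) (G : SimpleGraph V) : Prop :=
  ∃ H₀ : SimpleGraph.Subgraph (⊤ : SimpleGraph V),
    (∀ ⦃x y : V⦄, H₀.Adj x y → G.Adj x y) ∧ Relation.ReflTransGen SmoothStep H₀ K

/-- An abstract graph `H` is a topological minor of `G` if it is isomorphic to some
topological minor of `G`. -/
def IsTopMinorGraph {W : Type*} (H : SimpleGraph W) (G : SimpleGraph V) : Prop :=
  ∃ K : SimpleGraph.Subgraph (⊤ : SimpleGraph V), IsTopMinor K G ∧ Nonempty (H ≃g K.coe)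

/-- One edge-contraction step: `K` is obtained from `H` by contracting the edge `{a, b}`
(the vertex `b` is merged into `a`). -/
def ContractStep (H K : SimpleGraph.Subgraph (⊤ : SimpleGraph V)) : Prop :=
  ∃ a b : V, H.Adj a b ∧ K.verts = H.verts \ {b} ∧
    ∀ x y : V, K.Adj x y ↔ (x ≠ b ∧ y ≠ b ∧ x ≠ y ∧
      (H.Adj x y ∨ (x = a ∧ H.Adj b y) ∨ (y = a ∧ H.Adj x b)))

/-- `G` contains `Hpat` as a minor: some graph obtained from a subgraph of `G` by
contracting edges is isomorphic to `Hpat`. -/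
def HasMinor {W : Type*} (G : SimpleGraph V) (Hpat : SimpleGraph W) : Prop :=
  ∃ H₀ K : SimpleGraph.Subgraph (⊤ : SimpleGraph V),
    (∀ ⦃x y : V⦄, H₀.Adj x y → G.Adj x y) ∧ Relation.ReflTransGen ContractStep H₀ K ∧
      Nonempty (Hpat ≃g K.coe)

/-- Planarity, via Wagner's theorem: no `K₅`-minor and no `K₃,₃`-minor. -/
def IsPlanar (G : SimpleGraph V) : Prop :=
  ¬ HasMinor G (completeGraph (Fin 5)) ∧ ¬ HasMinor G (completeBipartiteGraph (Fin 3) (Fin 3))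

/-- A graph is triconnected if removing fewer than three vertices cannot disconnect it. -/
def Triconnected (G : SimpleGraph V) : Prop :=
  ∀ S : Set V, S.ncard < 3 → (G.induce Sᶜ).Preconnected

/-- A graph is claw-free if it has no induced `K_{1,3}`. -/
def ClawFree (G : SimpleGraph V) : Prop :=
  ∀ v a b c : V, G.Adj v a → G.Adj v b → G.Adj v c → a ≠ b → a ≠ c → b ≠ c →
    ¬ G.Adj a b → ¬ G.Adj a c → G.Adj b c

private lemma walk_to_torso [DecidableEq V] {G : SimpleGraph V} {W : Set V} {x y : W}
    (hne : (x : V) ≠ (y : V)) (p : G.Walk (x : V) (y : V))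
    (hp : ∀ z ∈ p.support, z ≠ (x : V) → z ≠ (y : V) → z ∉ W) :
    (torso G W).Adj x y := by
  rw [torso, fromRel_adj]
  exact ⟨Subtype.coe_ne_coe.mp hne,
    Or.inl (Or.inr ⟨p.toPath, p.toPath.2,
      fun z hz => hp z (p.support_toPath_subset hz)⟩)⟩

private lemma torso_to_walk {G : SimpleGraph V} {W : Set V} {x y : W}
    (h : (torso G W).Adj x y) :
    (x : V) ≠ (y : V) ∧ ∃ p : G.Walk (x : V) (y : V),
      ∀ z ∈ p.support, z ≠ (x : V) → z ≠ (y : V) → z ∉ W := by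
  rw [torso, fromRel_adj] at h
  obtain ⟨hne, h | h⟩ := h
  · refine ⟨Subtype.coe_ne_coe.mpr hne, ?_⟩
    rcases h with hadj | ⟨p, _, havoid⟩
    · refine ⟨hadj.toWalk, fun z hz hzx hzy => ?_⟩
      simp only [SimpleGraph.Adj.toWalk, Walk.support_cons, Walk.support_nil,
        List.mem_cons, List.mem_singleton] at hz
      rcases hz with rfl | rfl | h'
      · exact absurd rfl hzx
      · exact absurd rfl hzy
      · exact absurd h' List.not_mem_nil
    · exact ⟨p, fun z hz => havoid z hz⟩
  · refine ⟨Subtype.coe_ne_coe.mpr hne, ?_⟩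
    rcases h with hadj | ⟨p, _, havoid⟩
    · refine ⟨hadj.symm.toWalk, fun z hz hzx hzy => ?_⟩
      simp only [SimpleGraph.Adj.toWalk, Walk.support_cons, Walk.support_nil,
        List.mem_cons, List.mem_singleton] at hz
      rcases hz with rfl | rfl | h'
      · exact absurd rfl hzx
      · exact absurd rfl hzy
      · exact absurd h' List.not_mem_nil
    · refine ⟨p.reverse, fun z hz hzx hzy => ?_⟩
      rw [Walk.support_reverse, List.mem_reverse] at hz
      exact havoid z hz hzy hzx

/-- From a walk `v → a` internally avoiding `W`, extract the first edge `v — a'` together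
with a walk `a' → a` all of whose vertices except possibly `a` avoid `W`. -/
private lemma first_step [DecidableEq V] {G : SimpleGraph V} {W : Set V} {v a : V} (hva : v ≠ a)
    (p : G.Walk v a) (hp : ∀ z ∈ p.support, z ≠ v → z ≠ a → z ∉ W) :
    ∃ (a' : V) (q : G.Walk a' a), G.Adj v a' ∧ ∀ z ∈ q.support, z ≠ a → z ∉ W := by
  obtain ⟨p1, hpath, hp'⟩ : ∃ p1 : G.Walk v a, p1.IsPath ∧
      ∀ z ∈ p1.support, z ≠ v → z ≠ a → z ∉ W :=
    ⟨p.toPath, p.toPath.2, fun z hz => hp z (p.support_toPath_subset hz)⟩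
  clear hp
  cases p1 with
  | nil => exact absurd rfl hva
  | @cons _ w _ h q =>
    rw [Walk.cons_isPath_iff] at hpath
    refine ⟨w, q, h, fun z hz hza => ?_⟩
    have hzv : z ≠ v := fun e => hpath.2 (e ▸ hz)
    refine hp' z ?_ hzv hza
    rw [Walk.support_cons]
    exact List.mem_cons_of_mem _ hz

private lemma glue {G : SimpleGraph V} {W : Set V} {a b a' b' : V}
    (q : G.Walk a' a) (hq : ∀ z ∈ q.support, z ≠ a → z ∉ W)
    (r : G.Walk b' b) (hr : ∀ z ∈ r.support, z ≠ b → z ∉ W) (h : G.Adj a' b') :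
    ∃ p : G.Walk a b, ∀ z ∈ p.support, z ≠ a → z ≠ b → z ∉ W := by
  refine ⟨q.reverse.append (Walk.cons h r), fun z hz hza hzb => ?_⟩
  rw [Walk.support_append, List.mem_append] at hz
  rcases hz with hz | hz
  · rw [Walk.support_reverse, List.mem_reverse] at hz
    exact hq z hz hza
  · rw [Walk.support_cons, List.tail_cons] at hz
    exact hr z hz hzb

private lemma glue_eq {G : SimpleGraph V} {W : Set V} {a b m : V}
    (q : G.Walk m a) (hq : ∀ z ∈ q.support, z ≠ a → z ∉ W)
    (r : G.Walk m b) (hr : ∀ z ∈ r.support, z ≠ b → z ∉ W) :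
    ∃ p : G.Walk a b, ∀ z ∈ p.support, z ≠ a → z ≠ b → z ∉ W := by
  refine ⟨q.reverse.append r, fun z hz hza hzb => ?_⟩
  rw [Walk.support_append, List.mem_append] at hz
  rcases hz with hz | hz
  · rw [Walk.support_reverse, List.mem_reverse] at hz
    exact hq z hz hza
  · exact hr z (List.mem_of_mem_tail hz) hzb

/-- If `(T, X)` is a tree decomposition of adhesion at most two of a claw-free graph `G`,
then every torso of a bag is claw-free. -/
theorem torso_clawFree [Fintype V] {ι : Type*} [Fintype ι]
    (G : SimpleGraph V) (T : SimpleGraph ι) (X : ι → Set V)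
    (hTD : IsTreeDecomp G T X) (hadh : AdhesionLE T X 2)
    (hcf : ClawFree G) (i : ι) :
    ClawFree (torso G (X i)) := by
  classical
  intro v a b c hva hvb hvc hab hac hbc hnab hnac
  obtain ⟨hva', pa, hpa⟩ := torso_to_walk hva
  obtain ⟨hvb', pb, hpb⟩ := torso_to_walk hvb
  obtain ⟨hvc', pc, hpc⟩ := torso_to_walk hvc
  obtain ⟨a', qa, haa, hqa⟩ := first_step hva' pa hpa
  obtain ⟨b', qb, hbb, hqb⟩ := first_step hvb' pb hpb
  obtain ⟨c', qc, hcc, hqc⟩ := first_step hvc' pc hpc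
  have habV : (a : V) ≠ (b : V) := Subtype.coe_ne_coe.mpr hab
  have hacV : (a : V) ≠ (c : V) := Subtype.coe_ne_coe.mpr hac
  have hbcV : (b : V) ≠ (c : V) := Subtype.coe_ne_coe.mpr hbc
  have hab' : a' ≠ b' := by
    intro e; subst e
    obtain ⟨p, hp⟩ := glue_eq qa hqa qb hqb
    exact hnab (walk_to_torso habV p hp)
  have hac' : a' ≠ c' := by
    intro e; subst e
    obtain ⟨p, hp⟩ := glue_eq qa hqa qc hqc
    exact hnac (walk_to_torso hacV p hp)
  have hnadjab' : ¬ G.Adj a' b' := by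
    intro h
    obtain ⟨p, hp⟩ := glue qa hqa qb hqb h
    exact hnab (walk_to_torso habV p hp)
  have hnadjac' : ¬ G.Adj a' c' := by
    intro h
    obtain ⟨p, hp⟩ := glue qa hqa qc hqc h
    exact hnac (walk_to_torso hacV p hp)
  by_cases h1 : b' = c'
  · subst h1
    obtain ⟨p, hp⟩ := glue_eq qb hqb qc hqc
    exact walk_to_torso hbcV p hp
  · have hadj : G.Adj b' c' :=
      hcf (v : V) a' b' c' haa hbb hcc hab' hac' h1 hnadjab' hnadjac'
    obtain ⟨p, hp⟩ := glue qb hqb qc hqc hadj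
    exact walk_to_torso hbcV p hp
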